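/- Let $r \geq t \geq 3$, $K = K_{n_1,\ldots,n_r}$ with $n_1 \geq \cdots \geq n_r$, and let $\mathcal{P} = (P_1,\ldots,P_{t-1})$ be an extremal $(t-1)$-partition of $V(K)$. If some class $V_i$ is partial in a part $P_j$ (and in some other part $P_{j'}$), then $|V_i| \leq |P_j \setminus V_i|$. -/

import Mathlib

open Finset

/-- The subgraph `K[𝒫]` of `K_{n₁,…,n_r}` keeping only edges between different classes
`V_i` and different parts `P_j` of the vertex partition `P`. -/
def multipartitePartGraph {r s : ℕ} (n : Fin r → ℕ)
    (P : (Σ i : Fin r, Fin (n i)) → Fin s) : SimpleGraph (Σ i : Fin r, Fin (n i)) where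
  Adj u v := u.1 ≠ v.1 ∧ P u ≠ P v
  symm := ⟨fun _ _ h => ⟨h.1.symm, h.2.symm⟩⟩
  loopless := ⟨fun _ h => h.1 rfl⟩

/-- `e(K[𝒫])`, the number of edges of `K_{n₁,…,n_r}[𝒫]`. -/
noncomputable def partVal {r s : ℕ} (n : Fin r → ℕ)
    (P : (Σ i : Fin r, Fin (n i)) → Fin s) : ℕ :=
  (multipartitePartGraph n P).edgeSet.ncard

/-- The class `V_i` is partial in the part `P_j`:
`V_i ∩ P_j ≠ ∅` and `V_i ⊄ P_j`. -/
def PartialIn {r s : ℕ} {n : Fin r → ℕ} (P : (Σ i : Fin r, Fin (n i)) → Fin s)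
    (i : Fin r) (j : Fin s) : Prop :=
  (∃ v : Σ i : Fin r, Fin (n i), v.1 = i ∧ P v = j) ∧
  (∃ v : Σ i : Fin r, Fin (n i), v.1 = i ∧ P v ≠ j)

section Aux
variable {r s : ℕ} {n : Fin r → ℕ}

/-- number of vertices of class `ii` lying in part `k` -/
def pcnt (Q : (Σ i : Fin r, Fin (n i)) → Fin s) (k : Fin s) (ii : Fin r) : ℕ :=
  #(univ.filter fun v : Σ i : Fin r, Fin (n i) => Q v = k ∧ v.1 = ii)

/-- sum over ordered off-diagonal pairs of products -/
def pS {r : ℕ} (T : Finset (Fin r)) (f : Fin r → ℕ) : ℕ := ∑ p ∈ T.offDiag, f p.1 * f p.2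

/-- number of ordered pairs of vertices in the same part but different classes -/
def pHF (Q : (Σ i : Fin r, Fin (n i)) → Fin s) : ℕ := ∑ k, pS univ (pcnt Q k)

lemma pS_congr {T : Finset (Fin r)} {f g : Fin r → ℕ} (h : ∀ a ∈ T, f a = g a) :
    pS T f = pS T g := by
  refine Finset.sum_congr rfl fun p hp => ?_
  rw [Finset.mem_offDiag] at hp
  rw [h _ hp.1, h _ hp.2.1]

lemma pS_zero {T : Finset (Fin r)} {f : Fin r → ℕ} (h : ∀ a ∈ T, f a = 0) :
    pS T f = 0 :=
  Finset.sum_eq_zero fun p hp => by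
    rw [Finset.mem_offDiag] at hp; rw [h _ hp.1, zero_mul]

lemma sum_offDiag_swap {T : Finset (Fin r)} (F : Fin r → Fin r → ℕ) :
    ∑ p ∈ T.offDiag, F p.1 p.2 = ∑ p ∈ T.offDiag, F p.2 p.1 := by
  apply Finset.sum_nbij' (fun p => Prod.swap p) (fun p => Prod.swap p) <;>
    simp [Finset.mem_offDiag, and_comm, eq_comm, ne_comm] <;> tauto

lemma sum_offDiag_mul_le {T : Finset (Fin r)} (f g : Fin r → ℕ) :
    ∑ p ∈ T.offDiag, f p.1 * g p.2 ≤ (∑ a ∈ T, f a) * (∑ b ∈ T, g b) := by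
  rw [Finset.sum_mul_sum, ← Finset.sum_product']
  apply Finset.sum_le_sum_of_subset
  intro p hp
  rw [Finset.mem_offDiag] at hp
  exact Finset.mem_product.2 ⟨hp.1, hp.2.1⟩

lemma pS_add {T : Finset (Fin r)} (f g : Fin r → ℕ) :
    pS T (fun x => f x + g x) = pS T f + pS T g +
      (∑ p ∈ T.offDiag, f p.1 * g p.2 + ∑ p ∈ T.offDiag, g p.1 * f p.2) := by
  unfold pS
  rw [← Finset.sum_add_distrib, ← Finset.sum_add_distrib, ← Finset.sum_add_distrib]
  exact Finset.sum_congr rfl fun p _ => by ring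

lemma sum_offDiag_single {T : Finset (Fin r)} {ii : Fin r} (hii : ii ∈ T)
    (g : Fin r → ℕ) (d : ℕ) :
    ∑ p ∈ T.offDiag, g p.1 * (if p.2 = ii then d else 0) = (∑ a ∈ T.erase ii, g a) * d := by
  have : T.offDiag.filter (fun p => p.2 = ii) =
      (T.erase ii).map ⟨fun a => (a, ii), fun a b h => by simpa using h⟩ := by
    ext ⟨a, b⟩
    simp only [Finset.mem_filter, Finset.mem_offDiag, Finset.mem_map, Finset.mem_erase,
      Function.Embedding.coeFn_mk, Prod.mk.injEq]
    constructor
    · rintro ⟨⟨ha, hb, hab⟩, rfl⟩; exact ⟨a, ⟨hab, ha⟩, rfl⟩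
    · rintro ⟨x, ⟨hx, hxT⟩, hxe⟩
      have hxe' : x = a ∧ ii = b := by have h2 : (x, ii) = (a, b) := hxe; simpa using h2
      obtain ⟨rfl, rfl⟩ := hxe'
      exact ⟨⟨hxT, hii, hx⟩, rfl⟩
  calc ∑ p ∈ T.offDiag, g p.1 * (if p.2 = ii then d else 0)
      = ∑ p ∈ T.offDiag.filter (fun p => p.2 = ii), g p.1 * d := by
        rw [Finset.sum_filter]
        exact Finset.sum_congr rfl fun p _ => by split_ifs <;> simp
    _ = (∑ a ∈ T.erase ii, g a) * d := by rw [this, Finset.sum_map, Finset.sum_mul]; rfl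

lemma pS_add_single {T : Finset (Fin r)} {ii : Fin r} (hii : ii ∈ T)
    (g : Fin r → ℕ) (d : ℕ) :
    pS T (fun x => g x + if x = ii then d else 0) =
      pS T g + 2 * ((∑ b ∈ T.erase ii, g b) * d) := by
  rw [pS_add]
  have h1 : ∑ p ∈ T.offDiag, g p.1 * (if p.2 = ii then d else 0) =
      (∑ a ∈ T.erase ii, g a) * d := sum_offDiag_single hii g d
  have h2 : ∑ p ∈ T.offDiag, (if p.1 = ii then d else 0) * g p.2 =
      (∑ a ∈ T.erase ii, g a) * d := by
    rw [sum_offDiag_swap (fun a b => (if a = ii then d else 0) * g b)]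
    rw [← sum_offDiag_single hii g d]
    exact Finset.sum_congr rfl fun p _ => mul_comm _ _
  have h0 : pS T (fun x => if x = ii then d else 0) = 0 := by
    refine Finset.sum_eq_zero fun p hp => ?_
    rw [Finset.mem_offDiag] at hp
    by_cases h : p.1 = ii
    · have : ¬ p.2 = ii := fun hc => hp.2.2 (h.trans hc.symm)
      simp [h, this]
    · simp [h]
  rw [h0, h1, h2]; ring

lemma pS_split (f : Fin r → ℕ) (i : Fin r) :
    pS univ f = 2 * ((∑ b ∈ univ.erase i, f b) * f i) + pS (univ.erase i) f := by
  set g : Fin r → ℕ := fun x => if x = i then 0 else f x with hg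
  have hfg : ∀ x, f x = g x + (if x = i then f i else 0) := by
    intro x; by_cases h : x = i <;> simp [g, h]
  have h1 : pS univ f = pS univ g + 2 * ((∑ b ∈ univ.erase i, g b) * f i) := by
    rw [pS_congr (fun a _ => hfg a)]
    exact pS_add_single (Finset.mem_univ i) g (f i)
  have h2 : pS univ g = pS (univ.erase i) g := by
    unfold pS
    symm
    apply Finset.sum_subset
    · intro p hp
      rw [Finset.mem_offDiag] at hp ⊢
      exact ⟨Finset.mem_univ _, Finset.mem_univ _, hp.2.2⟩
    · intro p hp hnp
      rw [Finset.mem_offDiag] at hp hnp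
      push_neg at hnp
      by_cases h1 : p.1 = i
      · simp [g, h1]
      · by_cases h2 : p.2 = i
        · simp [g, h2]
        · exact absurd (hnp (Finset.mem_erase.2 ⟨h1, hp.1⟩)
            (Finset.mem_erase.2 ⟨h2, hp.2.1⟩)) hp.2.2
  have h3 : ∑ b ∈ univ.erase i, g b = ∑ b ∈ univ.erase i, f b :=
    Finset.sum_congr rfl fun b hb => by simp [g, (Finset.mem_erase.1 hb).1]
  have h4 : pS (univ.erase i) g = pS (univ.erase i) f :=
    pS_congr fun a ha => by simp [g, (Finset.mem_erase.1 ha).1]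
  rw [h1, h2, h3, h4]; ring

instance instDecMPG (Q : (Σ i : Fin r, Fin (n i)) → Fin s) :
    DecidableRel (multipartitePartGraph n Q).Adj := fun u v => inferInstanceAs (Decidable (u.1 ≠ v.1 ∧ Q u ≠ Q v))

lemma card_classFilter (n : Fin r → ℕ) (ii : Fin r) :
    #(univ.filter fun v : Σ i : Fin r, Fin (n i) => v.1 = ii) = n ii := by
  have : (univ.filter fun v : Σ i : Fin r, Fin (n i) => v.1 = ii) =
      (univ : Finset (Fin (n ii))).map ⟨Sigma.mk ii, sigma_mk_injective⟩ := by
    ext ⟨a, b⟩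
    simp only [Finset.mem_filter, Finset.mem_univ, true_and, Finset.mem_map,
      Function.Embedding.coeFn_mk]
    constructor
    · rintro rfl; exact ⟨b, rfl⟩
    · rintro ⟨x, hx⟩; cases hx; rfl
  rw [this, Finset.card_map, Finset.card_univ, Fintype.card_fin]

lemma sum_pcnt (Q : (Σ i : Fin r, Fin (n i)) → Fin s) (ii : Fin r) :
    ∑ k, pcnt Q k ii = n ii := by
  rw [← card_classFilter n ii,
    Finset.card_eq_sum_card_fiberwise (f := Q) (t := univ) (fun x _ => Finset.mem_univ _)]
  refine Finset.sum_congr rfl fun k _ => ?_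
  rw [Finset.filter_filter]
  unfold pcnt
  congr 1
  exact Finset.filter_congr fun v _ => by tauto

lemma pcnt_pos {Q : (Σ i : Fin r, Fin (n i)) → Fin s} {k : Fin s} {ii : Fin r}
    (v : Σ i : Fin r, Fin (n i)) (hv : Q v = k) (hv1 : v.1 = ii) : 1 ≤ pcnt Q k ii :=
  Finset.card_pos.2 ⟨v, Finset.mem_filter.2 ⟨Finset.mem_univ _, hv, hv1⟩⟩

lemma pcnt_congr {Q Q' : (Σ i : Fin r, Fin (n i)) → Fin s} {k k' : Fin s} {ι : Fin r}
    (h : ∀ v : Σ i : Fin r, Fin (n i), v.1 = ι → (Q v = k ↔ Q' v = k')) :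
    pcnt Q k ι = pcnt Q' k' ι := by
  unfold pcnt
  congr 1
  refine Finset.filter_congr fun v _ => ?_
  constructor
  · rintro ⟨h1, h2⟩; exact ⟨(h v h2).1 h1, h2⟩
  · rintro ⟨h1, h2⟩; exact ⟨(h v h2).2 h1, h2⟩

lemma pcnt_eq_zero {Q : (Σ i : Fin r, Fin (n i)) → Fin s} {k : Fin s} {ι : Fin r}
    (h : ∀ v : Σ i : Fin r, Fin (n i), v.1 = ι → Q v ≠ k) : pcnt Q k ι = 0 := by
  unfold pcnt
  rw [Finset.card_eq_zero, Finset.filter_eq_empty_iff]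
  rintro v _ ⟨h1, h2⟩
  exact h v h2 h1

lemma pcnt_eq_class {Q : (Σ i : Fin r, Fin (n i)) → Fin s} {k : Fin s} {ι : Fin r}
    (h : ∀ v : Σ i : Fin r, Fin (n i), v.1 = ι → Q v = k) : pcnt Q k ι = n ι := by
  unfold pcnt
  rw [← card_classFilter n ι]
  congr 1
  refine Finset.filter_congr fun v _ => ?_
  constructor
  · rintro ⟨_, h2⟩; exact h2
  · intro h2; exact ⟨h v h2, h2⟩

lemma Hcard_eq (Q : (Σ i : Fin r, Fin (n i)) → Fin s) :
    #(univ.filter fun p : (Σ i : Fin r, Fin (n i)) × (Σ i : Fin r, Fin (n i)) =>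
      p.1.1 ≠ p.2.1 ∧ Q p.1 = Q p.2) = pHF Q := by
  classical
  have H : ∀ p ∈ (univ.filter fun p : (Σ i : Fin r, Fin (n i)) × (Σ i : Fin r, Fin (n i)) =>
      p.1.1 ≠ p.2.1 ∧ Q p.1 = Q p.2),
      (Q p.1, (p.1.1, p.2.1)) ∈ ((univ : Finset (Fin s)) ×ˢ (univ : Finset (Fin r)).offDiag) := by
    intro p hp
    rw [Finset.mem_filter] at hp
    exact Finset.mem_product.2 ⟨Finset.mem_univ _,
      Finset.mem_offDiag.2 ⟨Finset.mem_univ _, Finset.mem_univ _, hp.2.1⟩⟩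
  rw [Finset.card_eq_sum_card_fiberwise H, Finset.sum_product]
  refine Finset.sum_congr rfl fun k _ => ?_
  unfold pS
  refine Finset.sum_congr rfl fun q hq => ?_
  have hq' : q.1 ≠ q.2 := (Finset.mem_offDiag.1 hq).2.2
  rw [Finset.filter_filter]
  have hpred : (univ.filter fun p : (Σ i : Fin r, Fin (n i)) × (Σ i : Fin r, Fin (n i)) =>
      (p.1.1 ≠ p.2.1 ∧ Q p.1 = Q p.2) ∧ (Q p.1, (p.1.1, p.2.1)) = (k, q)) =
      ((univ : Finset (Σ i : Fin r, Fin (n i))) ×ˢ univ).filter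
        fun p => (Q p.1 = k ∧ p.1.1 = q.1) ∧ (Q p.2 = k ∧ p.2.1 = q.2) := by
    rw [Finset.univ_product_univ]
    refine Finset.filter_congr fun p _ => ?_
    simp only [Prod.mk.injEq, Prod.ext_iff]
    constructor
    · rintro ⟨⟨hne, hQQ⟩, hQk, h1, h2⟩
      exact ⟨⟨hQk, h1⟩, hQQ ▸ hQk, h2⟩
    · rintro ⟨⟨hQ1, h1⟩, hQ2, h2⟩
      exact ⟨⟨by rw [h1, h2]; exact hq', hQ1.trans hQ2.symm⟩, hQ1, h1, h2⟩
  rw [hpred, Finset.filter_product (fun a => Q a = k ∧ a.1 = q.1)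
    (fun b => Q b = k ∧ b.1 = q.2), Finset.card_product]
  rfl

lemma twice_partVal (Q : (Σ i : Fin r, Fin (n i)) → Fin s) :
    2 * partVal n Q = #(univ.filter fun p : (Σ i : Fin r, Fin (n i)) × (Σ i : Fin r, Fin (n i)) =>
      p.1.1 ≠ p.2.1 ∧ Q p.1 ≠ Q p.2) := by
  rw [partVal, ← SimpleGraph.coe_edgeFinset, Set.ncard_coe_finset,
    SimpleGraph.two_mul_card_edgeFinset]
  congr 1

lemma pHF_le_of_partVal_le {Q Q' : (Σ i : Fin r, Fin (n i)) → Fin s}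
    (h : partVal n Q' ≤ partVal n Q) : pHF Q ≤ pHF Q' := by
  classical
  have key : ∀ R : (Σ i : Fin r, Fin (n i)) → Fin s,
      2 * partVal n R + pHF R =
        #(univ.filter fun p : (Σ i : Fin r, Fin (n i)) × (Σ i : Fin r, Fin (n i)) =>
          p.1.1 ≠ p.2.1) := by
    intro R
    rw [twice_partVal, ← Hcard_eq]
    have := Finset.card_filter_add_card_filter_not
      (s := (univ.filter fun p : (Σ i : Fin r, Fin (n i)) × (Σ i : Fin r, Fin (n i)) =>
        p.1.1 ≠ p.2.1)) (p := fun p => R p.1 ≠ R p.2)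
    rw [Finset.filter_filter, Finset.filter_filter] at this
    have e1 : (univ.filter fun p : (Σ i : Fin r, Fin (n i)) × (Σ i : Fin r, Fin (n i)) =>
        p.1.1 ≠ p.2.1 ∧ ¬ R p.1 ≠ R p.2) =
        (univ.filter fun p : (Σ i : Fin r, Fin (n i)) × (Σ i : Fin r, Fin (n i)) =>
        p.1.1 ≠ p.2.1 ∧ R p.1 = R p.2) := Finset.filter_congr fun p _ => by tauto
    rw [e1] at this
    rw [← this]
  have k1 := key Q
  have k2 := key Q'
  omega

lemma card_filter_split {α : Type*} [Fintype α] [DecidableEq α] (p : α → Prop)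
    [DecidablePred p] (v0 : α) :
    #(univ.filter p) = #((univ.erase v0).filter p) + if p v0 then 1 else 0 := by
  conv_lhs => rw [← Finset.insert_erase (Finset.mem_univ v0)]
  rw [Finset.filter_insert]
  split_ifs with h
  · rw [Finset.card_insert_of_notMem
      (fun hc => (Finset.mem_erase.1 (Finset.mem_filter.1 hc).1).1 rfl)]
  · simp

lemma pcnt_update_self (Q : (Σ i : Fin r, Fin (n i)) → Fin s)
    (v0 : Σ i : Fin r, Fin (n i)) (l k : Fin s) :
    pcnt (Function.update Q v0 l) k v0.1 + (if k = Q v0 then 1 else 0)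
      = pcnt Q k v0.1 + (if k = l then 1 else 0) := by
  classical
  unfold pcnt
  rw [card_filter_split (fun v => Function.update Q v0 l v = k ∧ v.1 = v0.1) v0,
      card_filter_split (fun v => Q v = k ∧ v.1 = v0.1) v0]
  have he : ((univ.erase v0).filter fun v => Function.update Q v0 l v = k ∧ v.1 = v0.1) =
      ((univ.erase v0).filter fun v => Q v = k ∧ v.1 = v0.1) :=
    Finset.filter_congr fun v hv => by
      rw [Function.update_of_ne (Finset.mem_erase.1 hv).1]
  rw [he]
  simp only [Function.update_self, and_true, eq_self_iff_true]
  have e1 : ((if l = k then 1 else 0) : ℕ) = if k = l then 1 else 0 := by simp [eq_comm]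
  have e2 : ((if Q v0 = k then 1 else 0) : ℕ) = if k = Q v0 then 1 else 0 := by simp [eq_comm]
  omega

lemma pcnt_update_ne (Q : (Σ i : Fin r, Fin (n i)) → Fin s)
    (v0 : Σ i : Fin r, Fin (n i)) (l : Fin s) {ι : Fin r} (h : ι ≠ v0.1) (k : Fin s) :
    pcnt (Function.update Q v0 l) k ι = pcnt Q k ι := by
  unfold pcnt
  congr 1
  refine Finset.filter_congr fun v _ => ?_
  by_cases hv : v = v0
  · subst hv
    constructor <;> (rintro ⟨h1, h2⟩; exact (h h2.symm).elim)
  · rw [Function.update_of_ne hv]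

end Aux
section Main
open Finset
variable {r s : ℕ} {n : Fin r → ℕ}

/-- number of vertices in part `k` outside class `i` -/
def pw (P : (Σ i : Fin r, Fin (n i)) → Fin s) (i : Fin r) (k : Fin s) : ℕ :=
  ∑ b ∈ univ.erase i, pcnt P k b

/-- pair count inside part `k` using classes other than `i` -/
def ph (P : (Σ i : Fin r, Fin (n i)) → Fin s) (i : Fin r) (k : Fin s) : ℕ :=
  pS (univ.erase i) (pcnt P k)

lemma pHF_formula (P : (Σ i : Fin r, Fin (n i)) → Fin s) (i : Fin r) :
    pHF P = 2 * (∑ k, pw P i k * pcnt P k i) + ∑ k, ph P i k := by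
  unfold pHF
  rw [Finset.sum_congr rfl (fun k _ => pS_split (pcnt P k) i), Finset.sum_add_distrib,
    ← Finset.mul_sum]
  rfl

lemma pw_min (P : (Σ i : Fin r, Fin (n i)) → Fin s)
    (hmin : ∀ Q : (Σ i : Fin r, Fin (n i)) → Fin s, pHF P ≤ pHF Q) (i : Fin r)
    (v0 : Σ i : Fin r, Fin (n i)) (hv0 : v0.1 = i) (l : Fin s) :
    pw P i (P v0) ≤ pw P i l := by
  classical
  have hQle := hmin (Function.update P v0 l)
  set Q := Function.update P v0 l with hQ
  have hne : ∀ (k : Fin s), ∀ b ∈ (univ : Finset (Fin r)).erase i,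
      pcnt Q k b = pcnt P k b := by
    intro k b hb
    exact pcnt_update_ne P v0 l (fun hc => (Finset.mem_erase.1 hb).1 (hc.trans hv0)) k
  have hwQ : ∀ k, pw Q i k = pw P i k := fun k => Finset.sum_congr rfl (hne k)
  have hSQ : ∀ k, ph Q i k = ph P i k := fun k => pS_congr (hne k)
  have hptw : ∀ k, pcnt Q k i + (if k = P v0 then 1 else 0)
      = pcnt P k i + (if k = l then 1 else 0) := by
    intro k
    have h := pcnt_update_self P v0 l k
    rwa [hv0] at h
  have main : (∑ k, pw P i k * pcnt Q k i) + pw P i (P v0)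
      = (∑ k, pw P i k * pcnt P k i) + pw P i l := by
    have e : ∀ k : Fin s, pw P i k * pcnt Q k i + (if k = P v0 then pw P i k else 0)
        = pw P i k * pcnt P k i + (if k = l then pw P i k else 0) := by
      intro k
      have h := congrArg (pw P i k * ·) (hptw k)
      simp only [mul_add, mul_ite, mul_one, mul_zero] at h
      exact h
    calc (∑ k, pw P i k * pcnt Q k i) + pw P i (P v0)
        = ∑ k : Fin s, (pw P i k * pcnt Q k i + if k = P v0 then pw P i k else 0) := by
          rw [Finset.sum_add_distrib, Fintype.sum_ite_eq' (P v0) (pw P i)]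
      _ = ∑ k : Fin s, (pw P i k * pcnt P k i + if k = l then pw P i k else 0) :=
          Finset.sum_congr rfl fun k _ => e k
      _ = (∑ k, pw P i k * pcnt P k i) + pw P i l := by
          rw [Finset.sum_add_distrib, Fintype.sum_ite_eq' l (pw P i)]
  have hQf : pHF Q = 2 * (∑ k, pw P i k * pcnt Q k i) + ∑ k, ph P i k := by
    rw [pHF_formula Q i]
    congr 1
    · congr 1
      exact Finset.sum_congr rfl fun k _ => by rw [hwQ k]
    · exact Finset.sum_congr rfl fun k _ => hSQ k
  have hPf := pHF_formula P i
  rw [hPf, hQf] at hQle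
  omega

end Main
/-- For an extremal `(t-1)`-partition `𝒫`: if `V_i` is partial in `P_j` (and in another
part `P_{j'}`), then `|V_i| ≤ |P_j \ V_i|`. -/
theorem stmt8 (r t : ℕ) (ht : 3 ≤ t) (hr : t ≤ r) (n : Fin r → ℕ)
    (hpos : ∀ i, 0 < n i) (hmono : Antitone n)
    (P : (Σ i : Fin r, Fin (n i)) → Fin (t - 1))
    (hmax : ∀ Q : (Σ i : Fin r, Fin (n i)) → Fin (t - 1), partVal n Q ≤ partVal n P)
    (i : Fin r) (j j' : Fin (t - 1)) (hjj' : j ≠ j')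
    (hj : PartialIn P i j) (hj' : PartialIn P i j') :
    n i ≤ {v : Σ i : Fin r, Fin (n i) | P v = j ∧ v.1 ≠ i}.ncard := by
  classical
  obtain ⟨⟨v1, hv1i, hv1j⟩, -⟩ := hj
  obtain ⟨⟨v2, hv2i, hv2j'⟩, -⟩ := hj'
  have hmin : ∀ Q : (Σ i : Fin r, Fin (n i)) → Fin (t - 1), pHF P ≤ pHF Q :=
    fun Q => pHF_le_of_partVal_le (hmax Q)
  -- rewrite the target
  have target_eq : {v : Σ i : Fin r, Fin (n i) | P v = j ∧ v.1 ≠ i}.ncard = pw P i j := by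
    have h1 : {v : Σ i : Fin r, Fin (n i) | P v = j ∧ v.1 ≠ i} =
        ↑(univ.filter fun v : Σ i : Fin r, Fin (n i) => P v = j ∧ v.1 ≠ i) := by
      ext v; simp
    rw [h1, Set.ncard_coe_finset]
    rw [Finset.card_eq_sum_card_fiberwise (f := Sigma.fst) (t := univ.erase i)
      (fun v hv => Finset.mem_erase.2 ⟨(Finset.mem_filter.1 hv).2.2, Finset.mem_univ _⟩)]
    refine Finset.sum_congr rfl fun b hb => ?_
    rw [Finset.filter_filter]
    have hb' := (Finset.mem_erase.1 hb).1
    unfold pcnt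
    congr 1
    refine Finset.filter_congr fun v _ => ?_
    constructor
    · rintro ⟨⟨h1, _⟩, h2⟩; exact ⟨h1, h2⟩
    · rintro ⟨h1, h2⟩; exact ⟨⟨h1, fun hc => hb' (h2.symm.trans hc)⟩, h2⟩
  rw [target_eq]
  -- minimality facts
  have hwjmin : ∀ l, pw P i j ≤ pw P i l := fun l => by
    have h := pw_min P hmin i v1 hv1i l
    rwa [hv1j] at h
  have hwj'eq : pw P i j' = pw P i j := by
    refine le_antisymm ?_ (hwjmin j')
    have h := pw_min P hmin i v2 hv2i j
    rwa [hv2j'] at h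
  have hall : ∀ k, pcnt P k i ≠ 0 → pw P i k = pw P i j := by
    intro k hk
    obtain ⟨v0, hv0⟩ := Finset.card_ne_zero.1 hk
    have hv0' := Finset.mem_filter.1 hv0
    refine le_antisymm ?_ (hwjmin k)
    have h := pw_min P hmin i v0 hv0'.2.2 j
    rwa [hv0'.2.1] at h
  by_cases hm : pw P i j = 0
  · -- the minimum is zero: derive a contradiction
    exfalso
    have hwj'0 : pw P i j' = 0 := by rw [hwj'eq]; exact hm
    have hzj : ∀ ι, ι ≠ i → pcnt P j ι = 0 := by
      intro ι hι
      exact Finset.sum_eq_zero_iff.1 hm ι (Finset.mem_erase.2 ⟨hι, Finset.mem_univ _⟩)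
    have hzj' : ∀ ι, ι ≠ i → pcnt P j' ι = 0 := by
      intro ι hι
      exact Finset.sum_eq_zero_iff.1 hwj'0 ι (Finset.mem_erase.2 ⟨hι, Finset.mem_univ _⟩)
    set x : Fin r → (Σ i : Fin r, Fin (n i)) := fun ι => ⟨ι, ⟨0, hpos ι⟩⟩ with hx
    have hmapsTo : ∀ ι ∈ (univ : Finset (Fin r)).erase i,
        P (x ι) ∈ ((univ : Finset (Fin (t - 1))).erase j).erase j' := by
      intro ι hι
      have hι' := (Finset.mem_erase.1 hι).1
      refine Finset.mem_erase.2 ⟨?_, Finset.mem_erase.2 ⟨?_, Finset.mem_univ _⟩⟩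
      · intro hc
        have h1 := pcnt_pos (x ι) hc rfl
        rw [hzj' ι hι'] at h1
        omega
      · intro hc
        have h1 := pcnt_pos (x ι) hc rfl
        rw [hzj ι hι'] at h1
        omega
    have hcard : #(((univ : Finset (Fin (t - 1))).erase j).erase j')
        < #((univ : Finset (Fin r)).erase i) := by
      rw [Finset.card_erase_of_mem (Finset.mem_erase.2 ⟨Ne.symm hjj', Finset.mem_univ _⟩),
        Finset.card_erase_of_mem (Finset.mem_univ _), Finset.card_erase_of_mem (Finset.mem_univ _),
        Finset.card_univ, Finset.card_univ, Fintype.card_fin, Fintype.card_fin]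
      omega
    obtain ⟨ι1, hι1, ι2, hι2, hne12, heq12⟩ :=
      Finset.exists_ne_map_eq_of_card_lt_of_maps_to hcard hmapsTo
    have hι1i := (Finset.mem_erase.1 hι1).1
    have hι2i := (Finset.mem_erase.1 hι2).1
    set u0 := x ι1 with hu0def
    have hu0fst : u0.1 = ι1 := rfl
    set k0 := P u0 with hk0
    have hmem1 := hmapsTo ι1 hι1
    have hk0j : k0 ≠ j := (Finset.mem_erase.1 (Finset.mem_erase.1 hmem1).2).1
    have hk0j' : k0 ≠ j' := (Finset.mem_erase.1 hmem1).1
    have hk0ι2 : 1 ≤ pcnt P k0 ι2 := pcnt_pos (x ι2) heq12.symm rfl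
    set R : (Σ i : Fin r, Fin (n i)) → Fin (t - 1) :=
      fun v => if v.1 = i then j else P v with hR
    set Q3 := Function.update R u0 j' with hQ3
    have d0 : ∀ ι, ι ≠ i → ∀ k, pcnt R k ι = pcnt P k ι := by
      intro ι hι k
      refine pcnt_congr fun v hv => ?_
      simp only [hR]
      rw [if_neg (fun hc => hι (hv.symm.trans hc))]
    have dQi : ∀ k, pcnt Q3 k i = if k = j then n i else 0 := by
      intro k
      rw [hQ3, pcnt_update_ne R u0 j' (show i ≠ u0.1 from fun hc => hι1i (hu0fst ▸ hc).symm) k]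
      by_cases hk : k = j
      · subst hk
        rw [if_pos rfl]
        exact pcnt_eq_class fun v hv => by simp only [hR]; rw [if_pos hv]
      · rw [if_neg hk]
        exact pcnt_eq_zero fun v hv hc => hk (by
          simp only [hR] at hc
          rw [if_pos hv] at hc
          exact hc.symm ▸ rfl)
    have d2 : ∀ ι, ι ≠ i → ι ≠ ι1 → ∀ k, pcnt Q3 k ι = pcnt P k ι := by
      intro ι h1 h2 k
      rw [hQ3, pcnt_update_ne R u0 j' (show ι ≠ u0.1 from fun hc => h2 (hc.trans hu0fst)) k,
        d0 ι h1 k]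
    have d3 : ∀ k, pcnt Q3 k ι1 + (if k = k0 then 1 else 0)
        = pcnt P k ι1 + (if k = j' then 1 else 0) := by
      intro k
      have h := pcnt_update_self R u0 j' k
      rw [← hQ3] at h
      have hRu0 : R u0 = k0 := by
        simp only [hR]
        rw [if_neg (show u0.1 ≠ i from fun hc => hι1i (hu0fst ▸ hc))]
      rw [hRu0, hu0fst, d0 ι1 hι1i k] at h
      exact h
    have hallw : ∀ k, pw P i k * pcnt P k i = 0 := by
      intro k
      by_cases hc : pcnt P k i = 0
      · rw [hc, mul_zero]
      · rw [hall k hc, hm, zero_mul]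
    have hPform : pHF P = ∑ k, ph P i k := by
      rw [pHF_formula P i, Finset.sum_eq_zero fun k _ => hallw k]
      simp
    have hb : ∀ k : Fin (t - 1), pS univ (pcnt Q3 k) + (if k = k0 then 2 else 0)
        ≤ ph P i k := by
      intro k
      rw [pS_split (pcnt Q3 k) i]
      by_cases hkj : k = j
      · rw [hkj]
        have hzz : ∀ b ∈ (univ : Finset (Fin r)).erase i, pcnt Q3 j b = 0 := by
          intro b hb'
          have hbi := (Finset.mem_erase.1 hb').1
          by_cases hb1 : b = ι1
          · rw [hb1]
            have h := d3 j
            rw [if_neg (Ne.symm hk0j), if_neg hjj', hzj ι1 hι1i] at h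
            omega
          · rw [d2 b hbi hb1, hzj b hbi]
        rw [Finset.sum_eq_zero hzz, pS_zero hzz, if_neg (Ne.symm hk0j)]
        simp
      · rw [dQi k, if_neg hkj, mul_zero, mul_zero, zero_add]
        by_cases hkj' : k = j'
        · rw [hkj']
          have hval : ∀ b ∈ (univ : Finset (Fin r)).erase i,
              pcnt Q3 j' b = (fun x : Fin r => 0 + if x = ι1 then 1 else 0) b := by
            intro b hb'
            have hbi := (Finset.mem_erase.1 hb').1
            by_cases hb1 : b = ι1
            · rw [hb1]
              have h := d3 j'
              rw [if_neg (Ne.symm hk0j'), if_pos rfl, hzj' ι1 hι1i] at h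
              simp only []
              simp
              omega
            · rw [d2 b hbi hb1, hzj' b hbi]
              simp [hb1]
          rw [pS_congr hval,
            pS_add_single (Finset.mem_erase.2 ⟨hι1i, Finset.mem_univ _⟩) (fun _ => 0) 1,
            pS_zero (fun a _ => rfl), if_neg (Ne.symm hk0j')]
          simp [ph]
        · by_cases hkk0 : k = k0
          · rw [hkk0]
            have hval : ∀ b ∈ (univ : Finset (Fin r)).erase i,
                pcnt P k0 b = (fun x : Fin r => pcnt Q3 k0 x + if x = ι1 then 1 else 0) b := by
              intro b hb'
              have hbi := (Finset.mem_erase.1 hb').1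
              by_cases hb1 : b = ι1
              · rw [hb1]
                have h := d3 k0
                rw [if_pos rfl, if_neg hk0j'] at h
                simp
                omega
              · rw [← d2 b hbi hb1 k0]
                simp [hb1]
            have heq : ph P i k0 = pS (univ.erase i) (pcnt Q3 k0)
                + 2 * ((∑ b ∈ ((univ : Finset (Fin r)).erase i).erase ι1, pcnt Q3 k0 b) * 1) := by
              unfold ph
              rw [pS_congr hval,
                pS_add_single (Finset.mem_erase.2 ⟨hι1i, Finset.mem_univ _⟩) _ 1]
            have hs1 : 1 ≤ ∑ b ∈ ((univ : Finset (Fin r)).erase i).erase ι1, pcnt Q3 k0 b := by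
              have hmem : ι2 ∈ ((univ : Finset (Fin r)).erase i).erase ι1 :=
                Finset.mem_erase.2 ⟨Ne.symm hne12, Finset.mem_erase.2 ⟨hι2i, Finset.mem_univ _⟩⟩
              calc 1 ≤ pcnt Q3 k0 ι2 := by
                    rw [d2 ι2 hι2i (Ne.symm hne12)]; exact hk0ι2
                _ ≤ _ := Finset.single_le_sum (fun b _ => Nat.zero_le _) hmem
            rw [if_pos rfl, heq, mul_one]
            omega
          · have hval : ∀ b ∈ (univ : Finset (Fin r)).erase i,
                pcnt Q3 k b = pcnt P k b := by
              intro b hb'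
              have hbi := (Finset.mem_erase.1 hb').1
              by_cases hb1 : b = ι1
              · rw [hb1]
                have h := d3 k
                rw [if_neg hkk0, if_neg hkj'] at h
                omega
              · exact d2 b hbi hb1 k
            rw [if_neg hkk0, pS_congr hval, add_zero]
            exact le_rfl
    have hsum : pHF Q3 + 2 ≤ pHF P := by
      rw [hPform]
      unfold pHF
      have e1 : (∑ k, pS univ (pcnt Q3 k)) + 2
          = ∑ k : Fin (t - 1), (pS univ (pcnt Q3 k) + if k = k0 then 2 else 0) := by
        rw [Finset.sum_add_distrib, Fintype.sum_ite_eq' k0 (fun _ => 2)]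
      rw [e1]
      exact Finset.sum_le_sum fun k _ => hb k
    have := hmin Q3
    omega
  · -- the minimum `m` is positive: bulk exchange
    set Q2 : (Σ i : Fin r, Fin (n i)) → Fin (t - 1) :=
      fun u => if u.1 = i then j else if P u = j then j' else P u with hQ2def
    have hq2i : ∀ v : Σ i : Fin r, Fin (n i), v.1 = i → Q2 v = j := by
      intro v hv; simp only [hQ2def]; rw [if_pos hv]
    have hq2j : ∀ v : Σ i : Fin r, Fin (n i), v.1 ≠ i → P v = j → Q2 v = j' := by
      intro v hv hpv; simp only [hQ2def]; rw [if_neg hv, if_pos hpv]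
    have hq2o : ∀ v : Σ i : Fin r, Fin (n i), v.1 ≠ i → P v ≠ j → Q2 v = P v := by
      intro v hv hpv; simp only [hQ2def]; rw [if_neg hv, if_neg hpv]
    have c1o : ∀ k, k ≠ j → pcnt Q2 k i = 0 := fun k hk =>
      pcnt_eq_zero fun v hv hc => hk (((hq2i v hv).symm.trans hc).symm)
    have c2 : ∀ ι, ι ≠ i → pcnt Q2 j ι = 0 := by
      intro ι hι
      refine pcnt_eq_zero fun v hv hc => ?_
      have hvi : v.1 ≠ i := fun h2 => hι (hv.symm.trans h2)
      by_cases hpv : P v = j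
      · exact hjj' ((hq2j v hvi hpv).symm.trans hc).symm
      · exact hpv ((hq2o v hvi hpv).symm.trans hc)
    have c3 : ∀ ι, ι ≠ i → pcnt Q2 j' ι = pcnt P j' ι + pcnt P j ι := by
      intro ι hι
      unfold pcnt
      rw [← Finset.card_union_of_disjoint (by
        rw [Finset.disjoint_left]
        rintro v hv1 hv2
        have h1 := (Finset.mem_filter.1 hv1).2.1
        have h2 := (Finset.mem_filter.1 hv2).2.1
        exact hjj' (h2.symm.trans h1))]
      congr 1
      rw [← Finset.filter_or]
      refine Finset.filter_congr fun v _ => ?_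
      constructor
      · rintro ⟨hc, hv⟩
        have hvi : v.1 ≠ i := fun h2 => hι (hv.symm.trans h2)
        by_cases hpv : P v = j
        · exact Or.inr ⟨hpv, hv⟩
        · exact Or.inl ⟨(hq2o v hvi hpv) ▸ hc, hv⟩
      · rintro (⟨hpv, hv⟩ | ⟨hpv, hv⟩)
        · have hvi : v.1 ≠ i := fun h2 => hι (hv.symm.trans h2)
          have hpj : P v ≠ j := by rw [hpv]; exact Ne.symm hjj'
          exact ⟨(hq2o v hvi hpj).trans hpv, hv⟩
        · have hvi : v.1 ≠ i := fun h2 => hι (hv.symm.trans h2)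
          exact ⟨hq2j v hvi hpv, hv⟩
    have c4 : ∀ ι k, ι ≠ i → k ≠ j → k ≠ j' → pcnt Q2 k ι = pcnt P k ι := by
      intro ι k hι hkj hkj'
      refine pcnt_congr fun v hv => ?_
      have hvi : v.1 ≠ i := fun h2 => hι (hv.symm.trans h2)
      by_cases hpv : P v = j
      · rw [hq2j v hvi hpv, hpv]
        exact iff_of_false (fun hc => hkj' hc.symm) (fun hc => hkj hc.symm)
      · rw [hq2o v hvi hpv]
    set m := pw P i j with hmdef
    set G : Fin (t - 1) → ℕ := fun k => if k = j then 0 else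
      if k = j' then ph P i j + ph P i j' + 2 * (m * m) else ph P i k with hG
    have hbound : ∀ k : Fin (t - 1), pS univ (pcnt Q2 k) ≤ G k := by
      intro k
      rw [pS_split (pcnt Q2 k) i]
      by_cases hkj : k = j
      · rw [hkj]
        have hzz : ∀ b ∈ (univ : Finset (Fin r)).erase i, pcnt Q2 j b = 0 :=
          fun b hb => c2 b (Finset.mem_erase.1 hb).1
        rw [Finset.sum_eq_zero hzz, pS_zero hzz]
        simp [hG]
      · rw [c1o k hkj, mul_zero, mul_zero, zero_add]
        by_cases hkj' : k = j'
        · rw [hkj']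
          have he : pS (univ.erase i) (pcnt Q2 j')
              = pS (univ.erase i) (fun b => pcnt P j' b + pcnt P j b) :=
            pS_congr fun b hb => c3 b (Finset.mem_erase.1 hb).1
          rw [he, pS_add]
          have b1 := sum_offDiag_mul_le (T := (univ : Finset (Fin r)).erase i)
            (pcnt P j') (pcnt P j)
          have b2 := sum_offDiag_mul_le (T := (univ : Finset (Fin r)).erase i)
            (pcnt P j) (pcnt P j')
          have hGval : G j' = ph P i j + ph P i j' + 2 * (m * m) := by
            simp [hG, Ne.symm hjj']
          rw [hGval]
          have hwj'm : (∑ b ∈ (univ : Finset (Fin r)).erase i, pcnt P j' b) = m := hwj'eq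
          have hwjm : (∑ b ∈ (univ : Finset (Fin r)).erase i, pcnt P j b) = m := rfl
          rw [hwj'm, hwjm] at b1 b2
          have e1 : ph P i j = pS (univ.erase i) (pcnt P j) := rfl
          have e2 : ph P i j' = pS (univ.erase i) (pcnt P j') := rfl
          rw [e1, e2]
          linarith
        · simp only [hG]
          rw [if_neg hkj, if_neg hkj']
          exact le_of_eq (pS_congr fun b hb => c4 b k (Finset.mem_erase.1 hb).1 hkj hkj')
    have hQ2le : pHF Q2 ≤ ∑ k, G k := by
      unfold pHF
      exact Finset.sum_le_sum fun k _ => hbound k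
    have hGsum : ∑ k, G k = (∑ k, ph P i k) + 2 * (m * m) := by
      have hj'mem : j' ∈ (univ : Finset (Fin (t - 1))).erase j :=
        Finset.mem_erase.2 ⟨Ne.symm hjj', Finset.mem_univ _⟩
      rw [← Finset.sum_erase_add _ _ (Finset.mem_univ j),
        ← Finset.sum_erase_add _ _ hj'mem,
        ← Finset.sum_erase_add univ (ph P i) (Finset.mem_univ j),
        ← Finset.sum_erase_add _ (ph P i) hj'mem]
      have e2 : ∑ k ∈ ((univ : Finset (Fin (t - 1))).erase j).erase j', G k
          = ∑ k ∈ ((univ : Finset (Fin (t - 1))).erase j).erase j', ph P i k := by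
        refine Finset.sum_congr rfl fun k hk => ?_
        have h1 := (Finset.mem_erase.1 hk).1
        have h2 := (Finset.mem_erase.1 (Finset.mem_erase.1 hk).2).1
        simp only [hG]
        rw [if_neg h2, if_neg h1]
      have hGj : G j = 0 := by simp [hG]
      have hGj' : G j' = ph P i j + ph P i j' + 2 * (m * m) := by
        simp [hG, Ne.symm hjj']
      rw [e2, hGj, hGj']
      ring
    have hPf : pHF P = 2 * (m * n i) + ∑ k, ph P i k := by
      rw [pHF_formula P i]
      have e : ∀ k, pw P i k * pcnt P k i = m * pcnt P k i := by
        intro k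
        by_cases hc : pcnt P k i = 0
        · rw [hc, mul_zero, mul_zero]
        · rw [hall k hc]
      rw [Finset.sum_congr rfl fun k _ => e k, ← Finset.mul_sum, sum_pcnt P i]
    have hfin := hmin Q2
    rw [hPf] at hfin
    have hQ2b : pHF Q2 ≤ (∑ k, ph P i k) + 2 * (m * m) := le_trans hQ2le (le_of_eq hGsum)
    have hmn : m * n i ≤ m * m := by linarith
    exact Nat.le_of_mul_le_mul_left hmn (Nat.pos_of_ne_zero hm)
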